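/- There exists an entrywise nonnegative nonzero matrix A in 𝔽^{n×n}_∗ (n ≥ 2) whose square in this algebra is a nonzero entrywise nonpositive matrix: taking A with α_1n = α_n1 = 1 and all other entries 0, the square A ∗ A has all entries zero except the (1,1) and (n,n) entries which equal −1. -/

import Mathlib

open Polynomial

/-- `A′`: the matrix obtained from `A` by negating its `(1, n)` entry
(indices `0` and `n-1` in 0-based notation). -/
def primeMat {𝔽 : Type*} [RCLike 𝔽] {n : ℕ} (A : Matrix (Fin n) (Fin n) 𝔽) :
    Matrix (Fin n) (Fin n) 𝔽 :=
  fun i j => if i.val = 0 ∧ j.val = n - 1 then -A i j else A i j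

/-- The product of the algebra `𝔽^{n×n}_∗`: `A ∗ B = (A′B′)′`. -/
def starMul {𝔽 : Type*} [RCLike 𝔽] {n : ℕ} (A B : Matrix (Fin n) (Fin n) 𝔽) :
    Matrix (Fin n) (Fin n) 𝔽 :=
  primeMat (primeMat A * primeMat B)

lemma starMul_compute {𝔽 : Type*} [RCLike 𝔽] {n : ℕ} (hn : 2 ≤ n)
    (A : Matrix (Fin n) (Fin n) 𝔽)
    (hA : A = fun i j =>
      if (i.val = 0 ∧ j.val = n - 1) ∨ (i.val = n - 1 ∧ j.val = 0) then 1 else 0) :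
    starMul A A = fun i j =>
      if (i.val = 0 ∧ j.val = 0) ∨ (i.val = n - 1 ∧ j.val = n - 1) then -1 else 0 := by
  subst hA
  obtain ⟨e0, he0⟩ : ∃ e : Fin n, e.val = 0 := ⟨⟨0, by omega⟩, rfl⟩
  obtain ⟨en, hen⟩ : ∃ e : Fin n, e.val = n - 1 := ⟨⟨n - 1, by omega⟩, rfl⟩
  have hne : en ≠ e0 := by rw [Ne, Fin.ext_iff, he0, hen]; omega
  have hP : primeMat (𝔽 := 𝔽) (fun i j =>
      if (i.val = 0 ∧ j.val = n - 1) ∨ (i.val = n - 1 ∧ j.val = 0) then 1 else 0) =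
      Matrix.single e0 en (-1 : 𝔽) + Matrix.single en e0 1 := by
    funext i j
    simp only [primeMat, Matrix.add_apply, Matrix.single, Matrix.of_apply,
      Fin.ext_iff, he0, hen]
    split_ifs <;> first | omega | norm_num
  unfold starMul
  rw [hP, add_mul, mul_add, mul_add,
    Matrix.single_mul_single_of_ne (i := e0) (j := en) (k := e0) (c := (-1 : 𝔽)) (h := hne) (d := -1),
    Matrix.single_mul_single_of_ne (i := en) (j := e0) (k := en) (c := (1 : 𝔽)) (h := hne.symm) (d := 1),
    Matrix.single_mul_single_same (i := e0) (j := en) (c := (-1 : 𝔽)) (k := e0) (d := 1),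
    Matrix.single_mul_single_same (i := en) (j := e0) (c := (1 : 𝔽)) (k := en) (d := -1)]
  funext i j
  simp only [primeMat, Matrix.add_apply, Matrix.zero_apply, Matrix.single,
    Matrix.of_apply, Fin.ext_iff, he0, hen, zero_add, add_zero]
  split_ifs <;> first | omega | norm_num

/-- In `𝔽^{n×n}_∗` (`n ≥ 2`) there is a positive matrix (nonzero, with all
entries nonnegative reals) whose square in this algebra is a negative matrix
(nonzero, with all entries nonpositive reals): the matrix with
`α₁ₙ = αₙ₁ = 1` and zeros elsewhere; its square has all entries zero except
the `(1,1)` and `(n,n)` entries, which equal `-1`. -/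
theorem star_positive_with_negative_square {𝔽 : Type*} [RCLike 𝔽] {n : ℕ}
    (hn : 2 ≤ n) :
    ∃ A : Matrix (Fin n) (Fin n) 𝔽,
      (A = fun i j =>
        if (i.val = 0 ∧ j.val = n - 1) ∨ (i.val = n - 1 ∧ j.val = 0) then 1 else 0) ∧
      A ≠ 0 ∧ (∀ i j, ∃ x : ℝ, 0 ≤ x ∧ A i j = (x : 𝔽)) ∧
      (starMul A A = fun i j =>
        if (i.val = 0 ∧ j.val = 0) ∨ (i.val = n - 1 ∧ j.val = n - 1) then -1 else 0) ∧
      starMul A A ≠ 0 ∧ (∀ i j, ∃ x : ℝ, x ≤ 0 ∧ starMul A A i j = (x : 𝔽)) := by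
  refine ⟨(fun i j =>
      if (i.val = 0 ∧ j.val = n - 1) ∨ (i.val = n - 1 ∧ j.val = 0) then 1 else 0),
    rfl, ?_, ?_, starMul_compute hn _ rfl, ?_, ?_⟩
  · intro h
    have := congrFun (congrFun h ⟨0, by omega⟩) ⟨n - 1, by omega⟩
    simp at this
  · intro i j
    by_cases h : (i.val = 0 ∧ j.val = n - 1) ∨ (i.val = n - 1 ∧ j.val = 0)
    · exact ⟨1, by norm_num, by simp [h]⟩
    · exact ⟨0, le_refl _, by simp [h]⟩
  · rw [starMul_compute hn _ rfl]
    intro h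
    have := congrFun (congrFun h ⟨0, by omega⟩) ⟨0, by omega⟩
    simp at this
  · intro i j
    rw [starMul_compute hn _ rfl]
    by_cases h : (i.val = 0 ∧ j.val = 0) ∨ (i.val = n - 1 ∧ j.val = n - 1)
    · exact ⟨-1, by norm_num, by simp [h]⟩
    · exact ⟨0, le_refl _, by simp [h]⟩
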